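/- Let q = 3^r and let m ≥ 2 be an integer with m = m'·3^j, gcd(m', 3) = 1, such that m' does not divide q − 1, and let u > 1 be the multiplicative order of q modulo m'. Let g be the product of all distinct monic irreducible factors of x^{m'} − 1 over F_q of degree less than u, and let g_1, …, g_k be the remaining distinct monic irreducible factors of x^{m'} − 1 (those of degree u). Set Δ := 1 − Σ_{i=1}^{k} 1/q^{deg(g_i)} and Λ := (k − 1)/Δ + 2. Then Δ > 0 and Λ ≤ m'. -/

import Mathlib

open Polynomial

/-- Let `q = 3^r`, `m = m'·3^j` with `gcd(m',3) = 1` and `m' ∤ q − 1`, and let `u > 1` be the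
multiplicative order of `q` modulo `m'`. If `g₁, …, g_k` are the distinct monic irreducible
factors of `x^{m'} − 1` over `F_q` of degree `u` (those not dividing the product `g` of the
factors of degree `< u`), then `Δ := 1 − Σᵢ 1/q^{deg gᵢ} > 0` and
`Λ := (k − 1)/Δ + 2 ≤ m'`. -/
theorem lambda_le_m' (r : ℕ) (hr : 0 < r) (q : ℕ) (hq : q = 3 ^ r)
    (m m' j : ℕ) (hm : 2 ≤ m) (hmm : m = m' * 3 ^ j) (hm3 : Nat.gcd m' 3 = 1)
    (hndvd : ¬ m' ∣ q - 1)
    (F : Type*) [Field F] [Fintype F] (hF : Fintype.card F = q)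
    (u : ℕ) (hu : u = orderOf (q : ZMod m')) (hu1 : 1 < u)
    (k : ℕ) (G : Fin k → Polynomial F) (hGinj : Function.Injective G)
    (hG : ∀ i, (G i).Monic ∧ Irreducible (G i) ∧ G i ∣ (X : Polynomial F) ^ m' - 1 ∧
      (G i).natDegree = u)
    (hGall : ∀ h : Polynomial F, h.Monic → Irreducible h → h ∣ (X : Polynomial F) ^ m' - 1 →
      h.natDegree = u → ∃ i, G i = h) :
    (0 : ℝ) < 1 - ∑ i, (1 : ℝ) / (q : ℝ) ^ (G i).natDegree ∧
    ((k : ℝ) - 1) / (1 - ∑ i, (1 : ℝ) / (q : ℝ) ^ (G i).natDegree) + 2 ≤ (m' : ℝ) := by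
  -- basic facts
  have hq3 : 3 ≤ q := by
    rw [hq]; calc (3:ℕ) = 3 ^ 1 := (pow_one 3).symm
    _ ≤ 3 ^ r := Nat.pow_le_pow_right (by norm_num) hr
  have hm'0 : m' ≠ 0 := by
    rintro rfl; rw [hmm] at hm; simp at hm
  have hm'2 : 2 ≤ m' := by
    rcases Nat.lt_or_ge m' 2 with h | h
    · interval_cases m'
      · exact absurd rfl hm'0
      · exact absurd (one_dvd _) hndvd
    · exact h
  -- m' < q ^ u
  have hmqu : m' < q ^ u := by
    have h1 : ((q : ZMod m')) ^ u = 1 := by rw [hu]; exact pow_orderOf_eq_one _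
    have h2 : ((q ^ u : ℕ) : ZMod m') = ((1 : ℕ) : ZMod m') := by push_cast; simpa using h1
    have h3 : (1 : ℕ) ≡ q ^ u [MOD m'] := ((ZMod.natCast_eq_natCast_iff _ _ _).mp h2).symm
    have h4 : m' ∣ q ^ u - 1 := (Nat.modEq_iff_dvd' (Nat.one_le_pow _ _ (by omega))).mp h3
    have h5 : q ^ u - 1 ≠ 0 := by
      have : 3 ^ u ≤ q ^ u := Nat.pow_le_pow_left hq3 u
      have : 2 ≤ q ^ u := by
        calc 2 ≤ 3 := by norm_num
        _ = 3 ^ 1 := (pow_one 3).symm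
        _ ≤ 3 ^ u := Nat.pow_le_pow_right (by norm_num) (by omega)
        _ ≤ q ^ u := Nat.pow_le_pow_left hq3 u
      omega
    have := Nat.le_of_dvd (Nat.pos_of_ne_zero h5) h4
    omega
  -- the product of the G i divides X^m' - 1, giving k * u ≤ m'
  have hXm : ((X : Polynomial F) ^ m' - 1) ≠ 0 := by
    intro h
    have h2 : ((X : Polynomial F) ^ m' - C 1).natDegree = m' := natDegree_X_pow_sub_C
    rw [map_one, h] at h2
    simp at h2
    omega
  have hcop : Pairwise (Function.onFun IsCoprime G) := by
    intro i i' hii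
    have h1 := hG i; have h2 := hG i'
    refine h1.2.1.coprime_iff_not_dvd.mpr ?_
    intro hdvd
    have : Associated (G i) (G i') :=
      associated_of_dvd_dvd hdvd (h1.2.1.dvd_symm h2.2.1 hdvd)
    exact hii (hGinj (Polynomial.eq_of_monic_of_associated h1.1 h2.1 this))
  have hproddvd : (∏ i, G i) ∣ (X : Polynomial F) ^ m' - 1 :=
    Fintype.prod_dvd_of_coprime hcop fun i => (hG i).2.2.1
  have hdegle : (∏ i, G i).natDegree ≤ m' := by
    have := Polynomial.natDegree_le_of_dvd hproddvd hXm
    have hdeg : ((X : Polynomial F) ^ m' - 1).natDegree = m' := by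
      have h2 : ((X : Polynomial F) ^ m' - C 1).natDegree = m' := natDegree_X_pow_sub_C
      rwa [map_one] at h2
    omega
  have hprodnd : (∏ i, G i).natDegree = k * u := by
    rw [Polynomial.natDegree_prod _ _ (fun i _ => (hG i).2.1.ne_zero)]
    simp [fun i => (hG i).2.2.2, Finset.sum_const, Finset.card_univ]
  have hku : k * u ≤ m' := by rw [← hprodnd]; exact hdegle
  have h2k : 2 * k ≤ m' := le_trans (by nlinarith) hku
  -- real arithmetic
  have hqR : (0:ℝ) < (q:ℝ) := by positivity
  have hquR : (0:ℝ) < (q:ℝ) ^ u := by positivity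
  have hsum : ∑ i, (1 : ℝ) / (q : ℝ) ^ (G i).natDegree = (k : ℝ) / (q:ℝ) ^ u := by
    rw [Finset.sum_congr rfl (fun i _ => by rw [(hG i).2.2.2])]
    simp [Finset.sum_const, Finset.card_univ, div_eq_mul_inv]
  rw [hsum]
  have hmqu' : (m' : ℝ) < (q:ℝ) ^ u := by exact_mod_cast hmqu
  have h2k' : 2 * (k:ℝ) ≤ (m' : ℝ) := by exact_mod_cast h2k
  have hhalf : (k : ℝ) / (q:ℝ) ^ u < 1/2 := by
    rw [div_lt_iff₀ hquR]; nlinarith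
  have hdelta : (0:ℝ) < 1 - (k : ℝ) / (q:ℝ) ^ u := by linarith
  refine ⟨hdelta, ?_⟩
  rcases Nat.eq_zero_or_pos k with rfl | hk
  · have : ((0:ℕ) : ℝ) - 1 < 0 := by norm_num
    have hneg : (((0:ℕ):ℝ) - 1) / (1 - ((0:ℕ) : ℝ) / (q:ℝ) ^ u) < 0 :=
      div_neg_of_neg_of_pos (by norm_num) (by simpa using hdelta)
    have hm'R : (2:ℝ) ≤ (m':ℝ) := by exact_mod_cast hm'2
    simp only [Nat.cast_zero] at hneg ⊢
    linarith
  · have hk1 : (1:ℝ) ≤ (k:ℝ) := by exact_mod_cast hk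
    have hb : ((k : ℝ) - 1) / (1 - (k : ℝ) / (q:ℝ) ^ u) ≤ 2 * ((k:ℝ) - 1) := by
      rw [div_le_iff₀ hdelta]; nlinarith
    linarith
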